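/- Let N ≥ 1 and let T1 : 𝕋 → Matrix q₁ p₁ ℂ, T2 : 𝕋 → Matrix q₁ p₂ ℂ, T3 : 𝕋 → Matrix q₂ p₁ ℂ be continuous. Suppose: U_i inner continuous, U_o continuous in H∞ pointwise invertible with inverse in H∞, T2 = U_i·U_o pointwise; Y := (I − U_iU_i^∼)T1; γ > ‖Y‖∞; Y_o continuous pointwise invertible with Y_o, Y_o⁻¹ ∈ H∞ and Y_oᴴY_o = γ²·I − YᴴY pointwise; V_ci continuous co-inner in H∞ and V_co continuous pointwise invertible with V_co, V_co⁻¹ ∈ H∞ and T3·Y_o⁻¹ = V_co·V_ci pointwise; Z := U_i^∼·T1·Y_o⁻¹·(I − V_ci^∼V_ci) with ‖Z‖∞ < 1; Z_co continuous pointwise invertible with Z_co, Z_co⁻¹ ∈ H∞ and Z_co·Z_co^∼ = I − Z·Z^∼ pointwise; R := Z_co⁻¹·U_i^∼·T1·Y_o⁻¹·V_ci^∼. Let V₀, …, V_{N−1} be p₂×q₂ complex matrices, V(z) := Σ_{i=0}^{N−1} V_i·z^{−i}, and define R̂(V)(z) := z^N·R(z) − Z_co(z)⁻¹·U_o(z)·(z^N·V(z))·V_co(z).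 If D : 𝕋 → Matrix p₂ q₂ ℂ is continuous with D ∈ H∞, and X := Z_co⁻¹·U_o·D·V_co satisfies ‖R̂(V) − X‖∞ ≤ 1, then the function Q(z) := V(z) + z^{−N}·D(z) satisfies ‖T1 − T2·Q·T3‖∞ ≤ γ. -/

import Mathlib

open Matrix

/-- The spectral norm (ℓ²→ℓ² operator norm, largest singular value) of a complex matrix. -/
noncomputable def specNorm {m n : Type*} [Fintype m] [Fintype n] [DecidableEq n]
    (M : Matrix m n ℂ) : ℝ :=
  ‖LinearMap.toContinuousLinearMap (Matrix.toEuclideanLin M)‖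

/-- The `H∞` norm of a matrix-valued function on the unit circle:
`‖F‖∞ = sup_{z ∈ 𝕋} ‖F(z)‖`. -/
noncomputable def hinfNorm {m n : Type*} [Fintype m] [Fintype n] [DecidableEq n]
    (F : Circle → Matrix m n ℂ) : ℝ :=
  ⨆ z : Circle, specNorm (F z)

/-- A matrix-valued function `F` on the unit circle belongs to `H∞` if there is a
matrix-valued function `G`, continuous on the closed unit disc and analytic on the open
unit disc, with `F(z) = G(z⁻¹)` for all `z` on the circle. -/
def MemHInf {m n : Type*} (F : Circle → Matrix m n ℂ) : Prop :=
  ∃ G : ℂ → Matrix m n ℂ,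
    (∀ i j, ContinuousOn (fun w => G w i j) (Metric.closedBall (0 : ℂ) 1)) ∧
    (∀ i j, AnalyticOn ℂ (fun w => G w i j) (Metric.ball (0 : ℂ) 1)) ∧
    (∀ z : Circle, F z = G ((z : ℂ)⁻¹))

/-- The distance from `R` to `H∞` in the `‖·‖∞` norm:
`dist(R, H∞) = inf { ‖R − X‖∞ : X continuous, X ∈ H∞ }`. -/
noncomputable def distHInf {m n : Type*} [Fintype m] [Fintype n] [DecidableEq n]
    (R : Circle → Matrix m n ℂ) : ℝ :=
  sInf {c : ℝ | ∃ X : Circle → Matrix m n ℂ,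
    Continuous X ∧ MemHInf X ∧ c = hinfNorm fun z => R z - X z}

section helpers
set_option linter.unusedSectionVars false
open scoped Matrix.Norms.L2Operator in
lemma specNorm_eq {m n : Type*} [Fintype m] [Fintype n] [DecidableEq n] (M : Matrix m n ℂ) :
    specNorm M = ‖M‖ := rfl

variable {m n p : Type*} [Fintype m] [Fintype n] [Fintype p]
  [DecidableEq m] [DecidableEq n] [DecidableEq p]

open scoped Matrix.Norms.L2Operator in
lemma specNorm_conjTranspose (M : Matrix m n ℂ) : specNorm Mᴴ = specNorm M := by
  rw [specNorm_eq, specNorm_eq, Matrix.l2_opNorm_conjTranspose]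

open scoped Matrix.Norms.L2Operator in
lemma specNorm_smul (c : ℂ) (M : Matrix m n ℂ) : specNorm (c • M) = ‖c‖ * specNorm M := by
  rw [specNorm_eq, specNorm_eq, norm_smul]

lemma specNorm_nonneg (M : Matrix m n ℂ) : 0 ≤ specNorm M := norm_nonneg _

lemma norm_teLin_apply_le (M : Matrix m n ℂ) (x : EuclideanSpace ℂ n) :
    ‖Matrix.toEuclideanLin M x‖ ≤ specNorm M * ‖x‖ :=
  (LinearMap.toContinuousLinearMap (Matrix.toEuclideanLin M)).le_opNorm x

lemma specNorm_le_of (M : Matrix m n ℂ) (c : ℝ) (hc : 0 ≤ c)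
    (h : ∀ x : EuclideanSpace ℂ n, ‖Matrix.toEuclideanLin M x‖ ≤ c * ‖x‖) :
    specNorm M ≤ c :=
  ContinuousLinearMap.opNorm_le_bound _ hc h

lemma teLin_mul (A : Matrix m n ℂ) (B : Matrix n p ℂ) (x : EuclideanSpace ℂ p) :
    Matrix.toEuclideanLin (A * B) x = Matrix.toEuclideanLin A (Matrix.toEuclideanLin B x) := by
  simp [Matrix.toEuclideanLin_apply, Matrix.mulVec_mulVec]

lemma teLin_one {n : Type*} [Fintype n] [DecidableEq n] (x : EuclideanSpace ℂ n) :
    Matrix.toEuclideanLin (1 : Matrix n n ℂ) x = x := by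
  simp [Matrix.toEuclideanLin_apply]

lemma inner_teLin_conjTranspose (A : Matrix m n ℂ) (x : EuclideanSpace ℂ n)
    (y : EuclideanSpace ℂ m) :
    (inner ℂ x (Matrix.toEuclideanLin Aᴴ y) : ℂ) = inner ℂ (Matrix.toEuclideanLin A x) y := by
  rw [Matrix.toEuclideanLin_conjTranspose_eq_adjoint, LinearMap.adjoint_inner_right]

lemma re_inner_cT_mul_self (A : Matrix m n ℂ) (x : EuclideanSpace ℂ n) :
    (inner ℂ x (Matrix.toEuclideanLin (Aᴴ * A) x) : ℂ).re = ‖Matrix.toEuclideanLin A x‖ ^ 2 := by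
  rw [teLin_mul, inner_teLin_conjTranspose]
  simpa using inner_self_eq_norm_sq (𝕜 := ℂ) (Matrix.toEuclideanLin A x)

lemma specNorm_continuous : Continuous (specNorm (m := m) (n := n)) := by
  have h : Continuous fun M : Matrix m n ℂ =>
      ((Matrix.toEuclideanLin.trans LinearMap.toContinuousLinearMap :
        Matrix m n ℂ ≃ₗ[ℂ] _).toLinearMap M) :=
    LinearMap.continuous_of_finiteDimensional _
  exact continuous_norm.comp h

lemma le_hinfNorm {F : Circle → Matrix m n ℂ} (hF : Continuous F) (z : Circle) :
    specNorm (F z) ≤ hinfNorm F :=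
  le_ciSup ((isCompact_range (specNorm_continuous.comp hF)).bddAbove) z

lemma hinfNorm_le {F : Circle → Matrix m n ℂ} {c : ℝ} (h : ∀ z, specNorm (F z) ≤ c) :
    hinfNorm F ≤ c := ciSup_le h

lemma hinfNorm_nonneg (F : Circle → Matrix m n ℂ) : 0 ≤ hinfNorm F :=
  Real.iSup_nonneg fun _ => norm_nonneg _

lemma continuous_matrix_inv {A : Circle → Matrix n n ℂ} (hA : Continuous A)
    (hU : ∀ z, IsUnit (A z)) : Continuous fun z => (A z)⁻¹ := by
  have hdet : ∀ z, (A z).det ≠ 0 := fun z =>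
    ((Matrix.isUnit_iff_isUnit_det _).mp (hU z)).ne_zero
  have h1 : Continuous fun z => ((A z).det)⁻¹ := (hA.matrix_det).inv₀ hdet
  have : Continuous fun z => ((A z).det)⁻¹ • (A z).adjugate := h1.smul hA.matrix_adjugate
  simpa [Matrix.inv_def, Ring.inverse_eq_inv'] using this

lemma sq_le_imp {a b : ℝ} (ha : 0 ≤ a) (hb : 0 ≤ b) (h : a ^ 2 ≤ b ^ 2) : a ≤ b := by
  nlinarith

end helpers

set_option maxHeartbeats 1000000 in
/-- Distributed H∞ control subject to delays, general `T3` case (Theorem 4, part 2):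
with `V(z) = Σ_{i<N} V_i z^{−i}` a FIR filter and
`R̂(V)(z) = z^N R(z) − Z_co(z)⁻¹ U_o(z)(z^N V(z)) V_co(z)`, if `‖R̂(V) − X‖∞ ≤ 1`
with `X = Z_co⁻¹ U_o D V_co`, `D ∈ H∞`, then `Q(z) = V(z) + z^{−N} D(z)` satisfies
`‖T1 − T2 Q T3‖∞ ≤ γ`. -/
theorem distributed_hinf_general_suboptimal (N : ℕ) (hN : 1 ≤ N) (q1 q2 p1 p2 : ℕ)
    (T1 : Circle → Matrix (Fin q1) (Fin p1) ℂ) (hT1 : Continuous T1)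
    (T2 : Circle → Matrix (Fin q1) (Fin p2) ℂ) (hT2 : Continuous T2)
    (T3 : Circle → Matrix (Fin q2) (Fin p1) ℂ) (hT3 : Continuous T3)
    (Ui : Circle → Matrix (Fin q1) (Fin p2) ℂ) (hUic : Continuous Ui)
    (hUiInner : ∀ z, (Ui z)ᴴ * Ui z = 1)
    (Uo : Circle → Matrix (Fin p2) (Fin p2) ℂ) (hUoc : Continuous Uo)
    (hUoH : MemHInf Uo) (hUoUnit : ∀ z, IsUnit (Uo z))
    (hUoInvH : MemHInf fun z => (Uo z)⁻¹)
    (hT2fact : ∀ z, T2 z = Ui z * Uo z)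
    (Y : Circle → Matrix (Fin q1) (Fin p1) ℂ)
    (hY : Y = fun z => (1 - Ui z * (Ui z)ᴴ) * T1 z)
    (γ : ℝ) (hγ : hinfNorm Y < γ)
    (Yo : Circle → Matrix (Fin p1) (Fin p1) ℂ) (hYoc : Continuous Yo)
    (hYoUnit : ∀ z, IsUnit (Yo z)) (hYoH : MemHInf Yo)
    (hYoInvH : MemHInf fun z => (Yo z)⁻¹)
    (hYofact : ∀ z, (Yo z)ᴴ * Yo z
      = ((γ : ℂ) ^ 2) • (1 : Matrix (Fin p1) (Fin p1) ℂ) - (Y z)ᴴ * Y z)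
    (Vci : Circle → Matrix (Fin q2) (Fin p1) ℂ) (hVcic : Continuous Vci)
    (hVciH : MemHInf Vci) (hVciCoInner : ∀ z, Vci z * (Vci z)ᴴ = 1)
    (Vco : Circle → Matrix (Fin q2) (Fin q2) ℂ) (hVcoc : Continuous Vco)
    (hVcoH : MemHInf Vco) (hVcoUnit : ∀ z, IsUnit (Vco z))
    (hVcoInvH : MemHInf fun z => (Vco z)⁻¹)
    (hT3fact : ∀ z, T3 z * (Yo z)⁻¹ = Vco z * Vci z)
    (Z : Circle → Matrix (Fin p2) (Fin p1) ℂ)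
    (hZ : Z = fun z => (Ui z)ᴴ * T1 z * (Yo z)⁻¹ * (1 - (Vci z)ᴴ * Vci z))
    (hZnorm : hinfNorm Z < 1)
    (Zco : Circle → Matrix (Fin p2) (Fin p2) ℂ) (hZcoc : Continuous Zco)
    (hZcoUnit : ∀ z, IsUnit (Zco z)) (hZcoH : MemHInf Zco)
    (hZcoInvH : MemHInf fun z => (Zco z)⁻¹)
    (hZcofact : ∀ z, Zco z * (Zco z)ᴴ
      = (1 : Matrix (Fin p2) (Fin p2) ℂ) - Z z * (Z z)ᴴ)
    (R : Circle → Matrix (Fin p2) (Fin q2) ℂ)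
    (hR : R = fun z => (Zco z)⁻¹ * (Ui z)ᴴ * T1 z * (Yo z)⁻¹ * (Vci z)ᴴ)
    (V : Fin N → Matrix (Fin p2) (Fin q2) ℂ)
    (Vf : Circle → Matrix (Fin p2) (Fin q2) ℂ)
    (hVf : Vf = fun z : Circle => ∑ i : Fin N, ((z : ℂ)⁻¹) ^ (i : ℕ) • V i)
    (Rhat : Circle → Matrix (Fin p2) (Fin q2) ℂ)
    (hRhat : Rhat = fun z : Circle =>
      ((z : ℂ) ^ N) • R z - (Zco z)⁻¹ * Uo z * (((z : ℂ) ^ N) • Vf z) * Vco z)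
    (D : Circle → Matrix (Fin p2) (Fin q2) ℂ) (hDc : Continuous D) (hDH : MemHInf D)
    (X : Circle → Matrix (Fin p2) (Fin q2) ℂ)
    (hX : X = fun z => (Zco z)⁻¹ * Uo z * D z * Vco z)
    (hRX : hinfNorm (fun z => Rhat z - X z) ≤ 1) :
    hinfNorm (fun z : Circle =>
        T1 z - T2 z * (Vf z + ((z : ℂ)⁻¹ ^ N) • D z) * T3 z) ≤ γ := by
  classical
  have hγ0 : 0 ≤ γ := le_trans (hinfNorm_nonneg Y) hγ.le
  -- continuity of Rhat - X
  have hcoe : Continuous fun z : Circle => (z : ℂ) := continuous_subtype_val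
  have hcne : ∀ z : Circle, (z : ℂ) ≠ 0 := fun z => Circle.coe_ne_zero z
  have hZcoInvc : Continuous fun z => (Zco z)⁻¹ := continuous_matrix_inv hZcoc hZcoUnit
  have hVfc : Continuous Vf := by
    rw [hVf]
    refine continuous_finset_sum _ fun i _ => ?_
    exact (((hcoe.inv₀ hcne).pow _).smul continuous_const)
  have hYoInvc : Continuous fun z => (Yo z)⁻¹ := continuous_matrix_inv hYoc hYoUnit
  have hRc : Continuous R := by
    rw [hR]
    exact (((hZcoInvc.matrix_mul (hUic.matrix_conjTranspose)).matrix_mul hT1).matrix_mul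
      hYoInvc).matrix_mul (hVcic.matrix_conjTranspose)
  have hRhatXc : Continuous fun z => Rhat z - X z := by
    rw [hRhat, hX]
    apply Continuous.sub
    · exact ((hcoe.pow _).smul (hRc)).sub
        ((((hZcoInvc.matrix_mul hUoc).matrix_mul ((hcoe.pow _).smul hVfc)).matrix_mul hVcoc))
    · exact ((hZcoInvc.matrix_mul hUoc).matrix_mul hDc).matrix_mul hVcoc

  apply hinfNorm_le
  intro z
  have hζ : (z : ℂ) ≠ 0 := hcne z
  have hdYo : IsUnit (Yo z).det := (Matrix.isUnit_iff_isUnit_det _).mp (hYoUnit z)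
  have hdZco : IsUnit (Zco z).det := (Matrix.isUnit_iff_isUnit_det _).mp (hZcoUnit z)
  set Q : Matrix (Fin p2) (Fin q2) ℂ := Vf z + ((z : ℂ)⁻¹ ^ N) • D z with hQ
  set A : Matrix (Fin p2) (Fin p1) ℂ := (Ui z)ᴴ * T1 z - Uo z * Q * T3 z with hA
  set B : Matrix (Fin p2) (Fin p1) ℂ := A * (Yo z)⁻¹ with hB
  set W : Matrix (Fin p2) (Fin q2) ℂ := R z - (Zco z)⁻¹ * (Uo z * (Q * Vco z)) with hWdef
  have hYz : Y z = (1 - Ui z * (Ui z)ᴴ) * T1 z := by rw [hY]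
  have hZz : Z z = (Ui z)ᴴ * T1 z * (Yo z)⁻¹ * (1 - (Vci z)ᴴ * Vci z) := by rw [hZ]
  have hRz : R z = (Zco z)⁻¹ * (Ui z)ᴴ * T1 z * (Yo z)⁻¹ * (Vci z)ᴴ := by rw [hR]
  have hRhz : Rhat z = ((z:ℂ) ^ N) • R z - (Zco z)⁻¹ * Uo z * (((z:ℂ) ^ N) • Vf z) * Vco z := by
    rw [hRhat]
  have hXz : X z = (Zco z)⁻¹ * Uo z * D z * Vco z := by rw [hX]
  -- F1
  have hUiY : (Ui z)ᴴ * Y z = 0 := by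
    rw [hYz, Matrix.sub_mul, Matrix.one_mul, Matrix.mul_sub]
    simp only [← Matrix.mul_assoc]
    rw [hUiInner z, Matrix.one_mul, sub_self]
  -- F2
  have hM : T1 z - T2 z * Q * T3 z = Y z + Ui z * A := by
    rw [hYz, hA, hT2fact z]
    simp only [Matrix.sub_mul, Matrix.mul_sub, Matrix.one_mul, Matrix.mul_assoc]
    abel
  have e1 : (Ui z * A)ᴴ * Y z = 0 := by
    rw [conjTranspose_mul, Matrix.mul_assoc, hUiY, Matrix.mul_zero]
  have e2 : (Y z)ᴴ * (Ui z * A) = 0 := by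
    have h := congrArg conjTranspose e1
    simpa [conjTranspose_mul, Matrix.mul_assoc] using h
  have e3 : (Ui z * A)ᴴ * (Ui z * A) = Aᴴ * A := by
    rw [conjTranspose_mul, Matrix.mul_assoc, ← Matrix.mul_assoc (Ui z)ᴴ (Ui z) A,
      hUiInner z, Matrix.one_mul]
  have hMM : (Y z + Ui z * A)ᴴ * (Y z + Ui z * A) = (Y z)ᴴ * Y z + Aᴴ * A := by
    simp only [conjTranspose_add, Matrix.add_mul, Matrix.mul_add, e1, e2, e3,
      add_zero, zero_add]
  -- cancellation helpers
  have c1 : ∀ P : Matrix (Fin p2) (Fin p1) ℂ, Zco z * ((Zco z)⁻¹ * P) = P := fun P => by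
    rw [← Matrix.mul_assoc, Matrix.mul_nonsing_inv _ hdZco, Matrix.one_mul]
  -- F4
  have hB4 : B = Z z + Zco z * (W * Vci z) := by
    rw [hB, hA, hWdef, hRz, hZz]
    simp only [Matrix.sub_mul, Matrix.mul_sub, Matrix.mul_one, Matrix.mul_assoc, c1,
      hT3fact z]
    abel
  -- F5
  have hZV : Z z * (Vci z)ᴴ = 0 := by
    rw [hZz]
    simp only [Matrix.sub_mul, Matrix.mul_sub, Matrix.mul_one, Matrix.one_mul,
      Matrix.mul_assoc, hVciCoInner z, sub_self]
  have hVZ : Vci z * (Z z)ᴴ = 0 := by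
    have h := congrArg conjTranspose hZV
    simpa [conjTranspose_mul, Matrix.mul_assoc] using h
  have c2 : ∀ P : Matrix (Fin q2) (Fin p2) ℂ, Z z * ((Vci z)ᴴ * P) = 0 := fun P => by
    rw [← Matrix.mul_assoc, hZV, Matrix.zero_mul]
  have c3 : ∀ P : Matrix (Fin q2) (Fin p2) ℂ, Vci z * ((Vci z)ᴴ * P) = P := fun P => by
    rw [← Matrix.mul_assoc, hVciCoInner z, Matrix.one_mul]
  -- F6
  have hBBH : B * Bᴴ = Z z * (Z z)ᴴ + Zco z * (W * (Wᴴ * (Zco z)ᴴ)) := by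
    rw [hB4]
    simp only [conjTranspose_add, conjTranspose_mul, Matrix.add_mul, Matrix.mul_add,
      Matrix.mul_assoc, c2, c3, hVZ, Matrix.mul_zero, Matrix.zero_mul, add_zero, zero_add]
  -- F7
  have hζζ : ((z:ℂ)) ^ N * ((z:ℂ)⁻¹) ^ N = 1 := by
    rw [← mul_pow, mul_inv_cancel₀ hζ, one_pow]
  have h7 : ((z:ℂ) ^ N) • W = Rhat z - X z := by
    rw [hWdef, hRhz, hXz, hQ]
    simp only [Matrix.mul_add, Matrix.add_mul, Matrix.smul_mul, Matrix.mul_smul,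
      smul_add, smul_sub, smul_smul, hζζ, one_smul, Matrix.mul_assoc]
    abel
  -- norm of W
  have hWn : specNorm W ≤ 1 := by
    have h1 : specNorm (Rhat z - X z) ≤ 1 := le_trans (le_hinfNorm hRhatXc z) hRX
    have hn : ‖((z:ℂ)) ^ N‖ = 1 := by
      rw [norm_pow]
      rw [Circle.norm_coe, one_pow]
    calc specNorm W = ‖((z:ℂ)) ^ N‖ * specNorm W := by rw [hn, one_mul]
      _ = specNorm (((z:ℂ) ^ N) • W) := (specNorm_smul _ _).symm
      _ ≤ 1 := by rw [h7]; exact h1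
  -- matrix sum fact
  have hsum2 : Z z * (Z z)ᴴ + Zco z * (Zco z)ᴴ = 1 := by
    rw [hZcofact z]; abel
  -- specNorm B ≤ 1
  have hBn : specNorm B ≤ 1 := by
    rw [← specNorm_conjTranspose]
    refine specNorm_le_of _ _ zero_le_one fun u => ?_
    rw [one_mul]
    have hsq : (inner ℂ u (Matrix.toEuclideanLin (B * Bᴴ) u) : ℂ).re
        = ‖Matrix.toEuclideanLin Bᴴ u‖ ^ 2 := by
      have h := re_inner_cT_mul_self Bᴴ u
      rwa [conjTranspose_conjTranspose] at h
    have hzsq : (inner ℂ u (Matrix.toEuclideanLin (Z z * (Z z)ᴴ) u) : ℂ).re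
        = ‖Matrix.toEuclideanLin (Z z)ᴴ u‖ ^ 2 := by
      have h := re_inner_cT_mul_self (Z z)ᴴ u
      rwa [conjTranspose_conjTranspose] at h
    have hwterm : (inner ℂ u (Matrix.toEuclideanLin (Zco z * (W * (Wᴴ * (Zco z)ᴴ))) u) : ℂ).re
        = ‖Matrix.toEuclideanLin Wᴴ (Matrix.toEuclideanLin (Zco z)ᴴ u)‖ ^ 2 := by
      have hm : Zco z * (W * (Wᴴ * (Zco z)ᴴ)) = (Wᴴ * (Zco z)ᴴ)ᴴ * (Wᴴ * (Zco z)ᴴ) := by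
        rw [conjTranspose_mul, conjTranspose_conjTranspose, conjTranspose_conjTranspose,
          Matrix.mul_assoc]
      rw [hm, re_inner_cT_mul_self, teLin_mul]
    have key1 : ‖Matrix.toEuclideanLin Bᴴ u‖ ^ 2
        = ‖Matrix.toEuclideanLin (Z z)ᴴ u‖ ^ 2
          + ‖Matrix.toEuclideanLin Wᴴ (Matrix.toEuclideanLin (Zco z)ᴴ u)‖ ^ 2 := by
      rw [← hsq, hBBH, map_add, LinearMap.add_apply, inner_add_right, Complex.add_re,
        hzsq, hwterm]
    have key2 : ‖Matrix.toEuclideanLin (Z z)ᴴ u‖ ^ 2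
        + ‖Matrix.toEuclideanLin (Zco z)ᴴ u‖ ^ 2 = ‖u‖ ^ 2 := by
      have hz1 := re_inner_cT_mul_self (Z z)ᴴ u
      have hz2 := re_inner_cT_mul_self (Zco z)ᴴ u
      rw [conjTranspose_conjTranspose] at hz1 hz2
      rw [← hz1, ← hz2, ← Complex.add_re, ← inner_add_right, ← LinearMap.add_apply,
        ← map_add, hsum2, teLin_one]
      simpa using inner_self_eq_norm_sq (𝕜 := ℂ) u
    have hWv : ‖Matrix.toEuclideanLin Wᴴ (Matrix.toEuclideanLin (Zco z)ᴴ u)‖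
        ≤ ‖Matrix.toEuclideanLin (Zco z)ᴴ u‖ := by
      calc ‖Matrix.toEuclideanLin Wᴴ (Matrix.toEuclideanLin (Zco z)ᴴ u)‖
          ≤ specNorm Wᴴ * ‖Matrix.toEuclideanLin (Zco z)ᴴ u‖ := norm_teLin_apply_le _ _
        _ ≤ 1 * ‖Matrix.toEuclideanLin (Zco z)ᴴ u‖ := by
            rw [specNorm_conjTranspose]
            exact mul_le_mul_of_nonneg_right hWn (norm_nonneg _)
        _ = ‖Matrix.toEuclideanLin (Zco z)ᴴ u‖ := one_mul _
    have hfin : ‖Matrix.toEuclideanLin Bᴴ u‖ ^ 2 ≤ ‖u‖ ^ 2 := by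
      rw [key1, ← key2]
      have := pow_le_pow_left₀ (norm_nonneg _) hWv 2
      linarith
    exact sq_le_imp (norm_nonneg _) (norm_nonneg _) hfin
  -- sum fact for Y
  have hsumY : (Y z)ᴴ * Y z + (Yo z)ᴴ * Yo z
      = ((γ : ℂ) ^ 2) • (1 : Matrix (Fin p1) (Fin p1) ℂ) := by
    rw [hYofact z]; abel
  -- final bound
  refine specNorm_le_of _ _ hγ0 fun x => ?_
  rw [hM]
  have hsqM : ‖Matrix.toEuclideanLin (Y z + Ui z * A) x‖ ^ 2
      = ‖Matrix.toEuclideanLin (Y z) x‖ ^ 2 + ‖Matrix.toEuclideanLin A x‖ ^ 2 := by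
    rw [← re_inner_cT_mul_self (Y z + Ui z * A) x, hMM, map_add, LinearMap.add_apply,
      inner_add_right, Complex.add_re, re_inner_cT_mul_self, re_inner_cT_mul_self]
  have hAx : ‖Matrix.toEuclideanLin A x‖ ≤ ‖Matrix.toEuclideanLin (Yo z) x‖ := by
    have hAB : A = B * Yo z := by
      rw [hB, Matrix.mul_assoc, Matrix.nonsing_inv_mul _ hdYo, Matrix.mul_one]
    rw [hAB, teLin_mul]
    calc ‖Matrix.toEuclideanLin B (Matrix.toEuclideanLin (Yo z) x)‖
        ≤ specNorm B * ‖Matrix.toEuclideanLin (Yo z) x‖ := norm_teLin_apply_le _ _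
      _ ≤ 1 * ‖Matrix.toEuclideanLin (Yo z) x‖ :=
          mul_le_mul_of_nonneg_right hBn (norm_nonneg _)
      _ = ‖Matrix.toEuclideanLin (Yo z) x‖ := one_mul _
  have hYY : ‖Matrix.toEuclideanLin (Y z) x‖ ^ 2 + ‖Matrix.toEuclideanLin (Yo z) x‖ ^ 2
      = γ ^ 2 * ‖x‖ ^ 2 := by
    rw [← re_inner_cT_mul_self (Y z) x, ← re_inner_cT_mul_self (Yo z) x, ← Complex.add_re,
      ← inner_add_right, ← LinearMap.add_apply, ← map_add, hsumY, _root_.map_smul,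
      LinearMap.smul_apply, teLin_one, inner_smul_right, inner_self_eq_norm_sq_to_K]
    simp [Complex.mul_re, Complex.ofReal_re, ← Complex.ofReal_pow]
  have hfin : ‖Matrix.toEuclideanLin (Y z + Ui z * A) x‖ ^ 2 ≤ (γ * ‖x‖) ^ 2 := by
    rw [hsqM]
    nlinarith [hAx, norm_nonneg (Matrix.toEuclideanLin A x),
      norm_nonneg (Matrix.toEuclideanLin (Yo z) x), hYY]
  exact sq_le_imp (norm_nonneg _) (by positivity) hfin
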